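/- Consider the $(4|1)$-dimensional Lie superalgebras $(4|1)_6$ with brackets $[e_1,e_2]=e_3$, $[e_1,e_3]=e_4$, $[f_1,f_1]=e_4$, and $(4|1)_4$ with brackets $[e_1,e_2]=e_3$, $[f_1,f_1]=e_4$. Then the family of basis changes $x_1=te_1$, $x_2=t^{-1}e_2$, $x_3=e_3$, $x_4=e_4$, $y_1=f_1$ applied to $(4|1)_6$ yields structure constants converging, as $t\to 0$, to those of $(4|1)_4$; i.e. $[x_1,x_2]=x_3$, $[x_1,x_3]=t\,x_4$, $[y_1,y_1]=x_4$. -/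

import Mathlib

/-- Even-even structure constants of `(4|1)₆`: `[e₁,e₂] = e₃`, `[e₁,e₃] = e₄`. -/
def b₆ (u v : Fin 4 → ℂ) : Fin 4 → ℂ :=
  ![0, 0, u 0 * v 1 - u 1 * v 0, u 0 * v 2 - u 2 * v 0]

/-- Odd-odd structure constants of `(4|1)₆`: `[f₁,f₁] = e₄`. -/
def Γ₆ (s r : ℂ) : Fin 4 → ℂ := ![0, 0, 0, s * r]

/-- Even-even structure constants of `(4|1)₄`: `[e₁,e₂] = e₃`. -/
def b₄ (u v : Fin 4 → ℂ) : Fin 4 → ℂ :=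
  ![0, 0, u 0 * v 1 - u 1 * v 0, 0]

/-- Odd-odd structure constants of `(4|1)₄`: `[f₁,f₁] = e₄`. -/
def Γ₄ (s r : ℂ) : Fin 4 → ℂ := ![0, 0, 0, s * r]

/-- The standard basis of the even part. -/
def e (i : Fin 4) : Fin 4 → ℂ := Pi.single i 1

lemma key (t : ℂ) (ht : t ≠ 0) :
    b₆ (t • e 0) (t⁻¹ • e 1) = e 2 ∧
    b₆ (t • e 0) (e 2) = t • e 3 ∧
    Γ₆ 1 1 = e 3 := by
  refine ⟨?_, ?_, ?_⟩ <;> funext i <;> fin_cases i <;>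
    simp [b₆, Γ₆, e, Pi.single, Function.update, mul_inv_cancel₀ ht]

/-- The degeneration `(4|1)₆ → (4|1)₄`: the basis change `x₁ = t e₁`,
`x₂ = t⁻¹ e₂`, `x₃ = e₃`, `x₄ = e₄`, `y₁ = f₁` gives `[x₁,x₂] = x₃`,
`[x₁,x₃] = t x₄`, `[y₁,y₁] = x₄`, whose limit as `t → 0` is the set of
structure constants of `(4|1)₄`. -/
theorem stmt16 :
    (∀ t : ℂ, t ≠ 0 →
      b₆ (t • e 0) (t⁻¹ • e 1) = e 2 ∧
      b₆ (t • e 0) (e 2) = t • e 3 ∧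
      Γ₆ 1 1 = e 3) ∧
    Filter.Tendsto
      (fun t : ℂ => (b₆ (t • e 0) (t⁻¹ • e 1), b₆ (t • e 0) (e 2), Γ₆ 1 1))
      (nhdsWithin 0 {t | t ≠ 0})
      (nhds (b₄ (e 0) (e 1), b₄ (e 0) (e 2), Γ₄ 1 1)) := by
  refine ⟨key, ?_⟩
  have h1 : b₄ (e 0) (e 1) = e 2 := by
    funext i; fin_cases i <;> simp [b₄, e, Pi.single, Function.update]
  have h2 : b₄ (e 0) (e 2) = (0 : Fin 4 → ℂ) := by
    funext i; fin_cases i <;> simp [b₄, e, Pi.single, Function.update]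
  have h3 : Γ₄ 1 1 = Γ₆ 1 1 := rfl
  have heq : ∀ᶠ t : ℂ in nhdsWithin 0 {t | t ≠ 0},
      (b₆ (t • e 0) (t⁻¹ • e 1), b₆ (t • e 0) (e 2), Γ₆ 1 1)
        = ((e 2 : Fin 4 → ℂ), t • e 3, Γ₆ 1 1) := by
    filter_upwards [self_mem_nhdsWithin] with t ht
    obtain ⟨a, b, -⟩ := key t ht
    rw [a, b]
  rw [h1, h2, h3]
  refine Filter.Tendsto.congr' (heq.mono fun _ h => h.symm) ?_
  have : Filter.Tendsto (fun t : ℂ => t • e 3) (nhdsWithin 0 {t | t ≠ 0})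
      (nhds (0 : Fin 4 → ℂ)) := by
    have h := ((continuous_id (X := ℂ)).smul (continuous_const (y := e 3))).tendsto (0 : ℂ)
    have h' : Filter.Tendsto (fun t : ℂ => t • e 3) (nhds 0) (nhds ((0 : ℂ) • e 3)) := h
    rw [zero_smul] at h'
    exact h'.mono_left nhdsWithin_le_nhds
  rw [nhds_prod_eq, nhds_prod_eq]
  exact (tendsto_const_nhds.prodMk (this.prodMk tendsto_const_nhds))
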